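/- arXiv:2406.03693 — 3 statements merged into one kernel-verified Lean document; each statement's English description precedes it below -/
import Mathlib

section
/- For any integer n ≥ 3 and elements α_1, …, α_n of a field (or commutative ring), the determinant of the n×n matrix whose rows are (1,…,1), (α_1,…,α_n), (α_1^2,…,α_n^2), …, (α_1^{n−2},…,α_n^{n−2}), and (α_1^{n+1},…,α_n^{n+1}) equals ((Σ_{i=1}^n α_i)^2 − Σ_{1≤i<j≤n} α_i α_j) · Π_{1≤i<j≤n}(α_j − α_i). -/
open Polynomial Finset Matrix

section Aux
variable {R : Type*} [CommRing R]

lemma pair_min' {ι : Type*} [LinearOrder ι] [DecidableEq ι] {a b : ι} (h : a < b)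
    (hne : ({a, b} : Finset ι).Nonempty) : ({a, b} : Finset ι).min' hne = a := by
  apply le_antisymm
  · exact Finset.min'_le _ _ (by simp)
  · apply Finset.le_min'
    intro y hy
    rcases Finset.mem_insert.mp hy with rfl | hy
    · exact le_rfl
    · rw [Finset.mem_singleton] at hy
      subst hy; exact h.le

lemma pair_max' {ι : Type*} [LinearOrder ι] [DecidableEq ι] {a b : ι} (h : a < b)
    (hne : ({a, b} : Finset ι).Nonempty) : ({a, b} : Finset ι).max' hne = b := by
  apply le_antisymm
  · apply Finset.max'_le
    intro y hy
    rcases Finset.mem_insert.mp hy with rfl | hy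
    · exact h.le
    · rw [Finset.mem_singleton] at hy
      subst hy; exact le_rfl
  · exact Finset.le_max' _ _ (by simp)

lemma aux_pairs (n : ℕ) (f : Fin n → R) :
    ∑ t ∈ Finset.powersetCard 2 (Finset.univ : Finset (Fin n)), ∏ i ∈ t, f i =
      ∑ i, ∑ j ∈ Finset.Ioi i, f i * f j := by
  have hne : ∀ t ∈ Finset.powersetCard 2 (Finset.univ : Finset (Fin n)), t.Nonempty := by
    intro t ht
    rw [Finset.mem_powersetCard] at ht
    exact Finset.card_pos.mp (by rw [ht.2]; norm_num)
  have hcard2 : ∀ t ∈ Finset.powersetCard 2 (Finset.univ : Finset (Fin n)), t.card = 2 :=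
    fun t ht => (Finset.mem_powersetCard.mp ht).2
  rw [Finset.sum_sigma']
  symm
  refine Finset.sum_bij' (fun x _ => ({x.1, x.2} : Finset (Fin n)))
    (fun t ht => ⟨t.min' (hne t ht), t.max' (hne t ht)⟩) ?_ ?_ ?_ ?_ ?_
  · rintro ⟨a, b⟩ hx
    rw [Finset.mem_sigma, Finset.mem_Ioi] at hx
    exact Finset.mem_powersetCard.mpr ⟨Finset.subset_univ _, Finset.card_pair hx.2.ne⟩
  · intro t ht
    rw [Finset.mem_sigma, Finset.mem_Ioi]
    exact ⟨Finset.mem_univ _, Finset.min'_lt_max'_of_card t (by rw [hcard2 t ht]; norm_num)⟩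
  · rintro ⟨a, b⟩ hx
    rw [Finset.mem_sigma, Finset.mem_Ioi] at hx
    dsimp only
    rw [pair_min' hx.2, pair_max' hx.2]
  · intro t ht
    dsimp only
    apply Finset.eq_of_subset_of_card_le
    · intro y hy
      rcases Finset.mem_insert.mp hy with rfl | hy
      · exact Finset.min'_mem _ _
      · rw [Finset.mem_singleton] at hy
        subst hy; exact Finset.max'_mem _ _
    · rw [hcard2 t ht, Finset.card_pair]
      exact (Finset.min'_lt_max'_of_card t (by rw [hcard2 t ht]; norm_num)).ne
  · rintro ⟨a, b⟩ hx
    rw [Finset.mem_sigma, Finset.mem_Ioi] at hx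
    dsimp only
    exact (Finset.prod_pair hx.2.ne).symm

end Aux

/-- Vandermonde-type determinant in which the row of `(n-1)`-st powers is replaced by the
row of `(n+1)`-st powers: it equals
`((∑ α_i)² - ∑_{i<j} α_i α_j) · ∏_{i<j} (α_j - α_i)`. -/
theorem stmt_13 (R : Type*) [CommRing R] (n : ℕ) (hn : 3 ≤ n) (α : Fin n → R) :
    (Matrix.of fun i j : Fin n =>
        α j ^ (if (i : ℕ) = n - 1 then n + 1 else (i : ℕ))).det =
      ((∑ i, α i) ^ 2 - ∑ i, ∑ j ∈ Finset.Ioi i, α i * α j) *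
        ∏ i, ∏ j ∈ Finset.Ioi i, (α j - α i) := by
  classical
  set e1 := ∑ i, α i with he1
  set e2 := ∑ i, ∑ j ∈ Finset.Ioi i, α i * α j with he2
  set P : R[X] := ∏ j, (X - C (α j)) with hP
  have hcard : Multiset.card (Finset.univ.val.map α) = n := by simp
  have hPeq : P = ((Finset.univ.val.map α).map fun t => X - C t).prod := by
    rw [Multiset.map_map]; rfl
  have hcoeff : ∀ k, k ≤ n → P.coeff k = (-1)^(n-k) * ((Finset.univ.val.map α)).esymm (n - k) := by
    intro k hk
    rw [hPeq, Multiset.prod_X_sub_C_coeff _ (by rw [hcard]; exact hk), hcard]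
  have hPn : P.coeff n = 1 := by
    rw [hcoeff n le_rfl]
    simp [Multiset.esymm]
  have hPn1 : P.coeff (n - 1) = -e1 := by
    rw [hcoeff (n-1) (by omega)]
    have h1 : n - (n-1) = 1 := by omega
    rw [h1, Finset.esymm_map_val]
    simp [Finset.powersetCard_one, he1]
  have hPn2 : P.coeff (n - 2) = e2 := by
    rw [hcoeff (n-2) (by omega)]
    have h1 : n - (n-2) = 2 := by omega
    rw [h1, Finset.esymm_map_val, aux_pairs]
    rw [he2]; ring
  have hPdeg : P.natDegree ≤ n := by
    rw [hP]
    refine le_trans (Polynomial.natDegree_prod_le _ _) (le_trans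
      (Finset.sum_le_sum fun i _ => Polynomial.natDegree_X_sub_C_le (α i)) ?_)
    simp
  have hPhigh : ∀ k, n < k → P.coeff k = 0 := fun k hk =>
    Polynomial.coeff_eq_zero_of_natDegree_lt (by omega)
  set r : R[X] := X^(n+1) - (X + C e1) * P with hr
  have hsplit : (X + C e1) * P = X * P + C e1 * P := by ring
  have hrdeg : r.natDegree ≤ n - 1 := by
    rw [Polynomial.natDegree_le_iff_coeff_eq_zero]
    intro m hm
    have hm' : n ≤ m := by omega
    have hx : (X * P).coeff m = P.coeff (m - 1) := by
      obtain ⟨m', rfl⟩ : ∃ m', m = m' + 1 := ⟨m - 1, by omega⟩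
      simp [Polynomial.coeff_X_mul]
    rw [hr, coeff_sub, hsplit, coeff_add, coeff_C_mul, coeff_X_pow, hx]
    by_cases h1 : m = n
    · rw [h1, hPn, hPn1, if_neg (by omega : ¬ n = n + 1)]
      ring
    · by_cases h2 : m = n + 1
      · rw [h2]
        have h3 : n + 1 - 1 = n := rfl
        rw [h3, hPn, hPhigh _ (by omega), if_pos rfl]
        ring
      · rw [hPhigh _ (by omega), hPhigh _ (by omega), if_neg (by omega : ¬ m = n + 1)]
        ring
  have hrcoeff : r.coeff (n - 1) = e1^2 - e2 := by
    have hx : (X * P).coeff (n - 1) = P.coeff (n - 2) := by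
      obtain ⟨m', hm'⟩ : ∃ m', n - 1 = m' + 1 := ⟨n - 2, by omega⟩
      rw [hm']
      have h4 : m' = n - 2 := by omega
      rw [Polynomial.coeff_X_mul, h4]
    rw [hr, coeff_sub, hsplit, coeff_add, coeff_C_mul, coeff_X_pow, hx, hPn1, hPn2]
    rw [if_neg (by omega : ¬ n - 1 = n + 1)]
    ring
  have hPeval : ∀ j : Fin n, P.eval (α j) = 0 := by
    intro j
    rw [hP, Polynomial.eval_prod]
    exact Finset.prod_eq_zero (Finset.mem_univ j) (by simp)
  have hreval : ∀ j : Fin n, r.eval (α j) = α j ^ (n+1) := by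
    intro j
    rw [hr]
    simp [hPeval j]
  set p : Fin n → R[X] := fun i => if (i : ℕ) = n - 1 then r else X ^ (i : ℕ) with hp
  have hpdeg : ∀ i : Fin n, (p i).natDegree ≤ i := by
    intro i
    rw [hp]
    dsimp only
    split
    · next h => exact le_trans hrdeg (by omega)
    · exact Polynomial.natDegree_X_pow_le _
  have hM : (Matrix.of fun i j : Fin n => α j ^ (if (i : ℕ) = n - 1 then n + 1 else (i : ℕ)))
      = (Matrix.of fun i j : Fin n => (p j).eval (α i))ᵀ := by
    ext i j
    simp only [Matrix.of_apply, Matrix.transpose_apply, hp]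
    split
    · next h => exact (hreval j).symm
    · simp
  rw [hM, Matrix.det_transpose,
    Matrix.eval_matrixOfPolynomials_eq_vandermonde_mul_matrixOfPolynomials α p hpdeg,
    Matrix.det_mul, Matrix.det_vandermonde]
  have hB : (Matrix.of fun i j : Fin n => (p j).coeff i).det = e1^2 - e2 := by
    have htri : (Matrix.of fun i j : Fin n => (p j).coeff i).BlockTriangular id := by
      intro i j hij
      simp only [Matrix.of_apply, hp]
      have hij' : (j : ℕ) < (i : ℕ) := hij
      have hi : (i : ℕ) < n := i.isLt
      split
      · next h => omega
      · rw [Polynomial.coeff_X_pow]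
        simp only [if_neg (by omega : ¬ (i : ℕ) = (j : ℕ))]
    rw [Matrix.det_of_upperTriangular htri]
    rw [Finset.prod_eq_single (⟨n - 1, by omega⟩ : Fin n)]
    · simp only [Matrix.of_apply, hp]
      simpa using hrcoeff
    · intro b _ hb
      have hb' : (b : ℕ) ≠ n - 1 := fun h => hb (Fin.ext h)
      simp only [Matrix.of_apply, hp, if_neg hb']
      rw [Polynomial.coeff_X_pow, if_pos rfl]
    · intro h
      exact absurd (Finset.mem_univ _) h
  rw [hB]
  ring
end

section
/- Any k−1 columns of the matrix G_k are linearly independent over F_q; consequently, the minimum Hamming distance of the Euclidean dual code C_k(A,v)^⊥ is at least k. -/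
/-- The Euclidean dual of a code `C ⊆ F^N`. -/
def dualCode {F : Type*} [Field F] {N : ℕ} (C : Submodule F (Fin N → F)) :
    Submodule F (Fin N → F) where
  carrier := { y | ∀ x ∈ C, ∑ i, x i * y i = 0 }
  zero_mem' := fun x _ => by simp
  add_mem' := fun {a b} ha hb x hx => by
    have h : ∑ i, x i * (a + b) i = (∑ i, x i * a i) + ∑ i, x i * b i := by
      rw [← Finset.sum_add_distrib]
      exact Finset.sum_congr rfl fun i _ => by simp [mul_add]
    rw [h, ha x hx, hb x hx, add_zero]
  smul_mem' := fun c {a} ha x hx => by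
    have h : ∑ i, x i * (c • a) i = c * ∑ i, x i * a i := by
      rw [Finset.mul_sum]
      exact Finset.sum_congr rfl fun i _ => by
        simp only [Pi.smul_apply, smul_eq_mul]; ring
    rw [h, ha x hx, mul_zero]

/-- The k×(n+2) generator matrix `G_k` of `C_k(A,v)`. -/
noncomputable def Gkmat (F : Type*) [Field F] (n k : ℕ) (α v : Fin n → F) (δ : F) :
    Fin k → Fin (n + 2) → F := fun i j =>
  if hj : (j : ℕ) < n then v ⟨j, hj⟩ * α ⟨j, hj⟩ ^ (if (i : ℕ) = k - 1 then k else (i : ℕ))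
  else if (j : ℕ) = n then (if (i : ℕ) = k - 1 then 1 else 0)
  else if (i : ℕ) = k - 2 then 1 else if (i : ℕ) = k - 1 then δ else 0

set_option linter.unusedVariables false

lemma vdm_zero {F : Type*} [Field F] {N t : ℕ} (T : Finset (Fin N)) (hT : T.card = t)
    (a : Fin N → F) (ha : Set.InjOn a T) (d : Fin N → F)
    (h : ∀ i : ℕ, i < t → ∑ j ∈ T, d j * a j ^ i = 0) :
    ∀ j ∈ T, d j = 0 := by
  classical
  let e : {x // x ∈ T} ≃ Fin t := T.equivFinOfCardEq hT
  set M : Matrix (Fin t) (Fin t) F := fun i j => a (e.symm j : Fin N) ^ (i : ℕ) with hM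
  have hdet : M.det ≠ 0 := by
    have : M = (Matrix.vandermonde (fun j : Fin t => a (e.symm j : Fin N))).transpose := by
      ext i j; simp [hM, Matrix.vandermonde, Matrix.transpose_apply]
    rw [this, Matrix.det_transpose, Matrix.det_vandermonde_ne_zero_iff]
    intro j1 j2 hj
    have := ha (e.symm j1).2 (e.symm j2).2 hj
    have : e.symm j1 = e.symm j2 := Subtype.ext this
    simpa using congrArg e this
  have hmv : M.mulVec (fun j => d (e.symm j : Fin N)) = 0 := by
    funext i
    have : (M.mulVec fun j => d (e.symm j : Fin N)) i
        = ∑ j ∈ T, d j * a j ^ (i : ℕ) := by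
      rw [Matrix.mulVec, dotProduct]
      rw [← Finset.sum_attach T (fun j => d j * a j ^ (i : ℕ)), ← Finset.univ_eq_attach]
      rw [← Equiv.sum_comp e.symm (fun x : {x // x ∈ T} => d (x : Fin N) * a (x : Fin N) ^ (i : ℕ))]
      exact Finset.sum_congr rfl fun j _ => by ring
    rw [Pi.zero_apply, this]
    exact h i i.2
  have hz := Matrix.eq_zero_of_mulVec_eq_zero hdet hmv
  intro j hj
  have := congrFun hz (e ⟨j, hj⟩)
  simpa using this


lemma key_dep {F : Type*} [Field F] (n k : ℕ) (hk : 3 ≤ k) (hkn : k ≤ n)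
    (α v : Fin n → F) (hα : Function.Injective α) (hv : ∀ i, v i ≠ 0) (δ : F)
    (S : Finset (Fin (n + 2))) (hS : S.card = k - 1)
    (c : Fin (n + 2) → F) (hc : ∀ j, j ∉ S → c j = 0)
    (hsum : ∀ i : Fin k, ∑ j, c j * Gkmat F n k α v δ i j = 0) :
    ∀ j, c j = 0 := by
  classical
  set G := Gkmat F n k α v δ with hG
  set jn : Fin (n + 2) := ⟨n, by omega⟩ with hjn
  set jn1 : Fin (n + 2) := ⟨n + 1, by omega⟩ with hjn1
  set T : Finset (Fin (n + 2)) := S.filter (fun j => (j : ℕ) < n) with hT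
  have hTS : T ⊆ S := Finset.filter_subset _ _
  have hTcard : T.card ≤ k - 1 := hS ▸ Finset.card_le_card hTS
  have hjnT : jn ∉ T := by
    simp only [hT, Finset.mem_filter, hjn, not_and]
    intro _; omega
  have hjn1T : jn1 ∉ T := by
    simp only [hT, Finset.mem_filter, hjn1, not_and]
    intro _; omega
  have hne : jn ≠ jn1 := by simp [hjn, hjn1, Fin.ext_iff]
  -- entries of G
  have Gjn : ∀ i : Fin k, G i jn = if (i : ℕ) = k - 1 then 1 else 0 := by
    intro i
    simp only [hG, Gkmat, hjn]
    rw [dif_neg (by omega)]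
    simp
  have Gjn1 : ∀ i : Fin k,
      G i jn1 = if (i : ℕ) = k - 2 then 1 else if (i : ℕ) = k - 1 then δ else 0 := by
    intro i
    simp only [hG, Gkmat, hjn1]
    rw [dif_neg (by omega)]
    rw [if_neg (by omega)]
  have GTmem : ∀ (i : Fin k) (j : Fin (n + 2)) (hj : (j : ℕ) < n),
      G i j = v ⟨j, hj⟩ * α ⟨j, hj⟩ ^ (if (i : ℕ) = k - 1 then k else (i : ℕ)) := by
    intro i j hj
    simp only [hG, Gkmat]
    rw [dif_pos hj]
  -- splitting the total sum
  have hsplit : ∀ i : Fin k,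
      c jn * G i jn + (c jn1 * G i jn1 + ∑ j ∈ T, c j * G i j) = 0 := by
    intro i
    have hsub : insert jn (insert jn1 T) ⊆ Finset.univ := Finset.subset_univ _
    have hz : ∀ x ∈ Finset.univ, x ∉ insert jn (insert jn1 T) → c x * G i x = 0 := by
      intro x _ hx
      simp only [Finset.mem_insert] at hx
      push_neg at hx
      obtain ⟨hx1, hx2, hx3⟩ := hx
      have hxn : (x : ℕ) < n := by
        have := x.2
        have h1 : (x : ℕ) ≠ n := fun h => hx1 (Fin.ext h)
        have h2 : (x : ℕ) ≠ n + 1 := fun h => hx2 (Fin.ext h)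
        omega
      have : x ∉ S := by
        intro hxS
        exact hx3 (Finset.mem_filter.2 ⟨hxS, hxn⟩)
      rw [hc x this, zero_mul]
    have e1 : ∑ j ∈ insert jn (insert jn1 T), c j * G i j = ∑ j, c j * G i j :=
      Finset.sum_subset hsub hz
    rw [Finset.sum_insert (by simp [Finset.mem_insert, hne, hjnT]),
        Finset.sum_insert hjn1T] at e1
    rw [e1]
    exact hsum i
  -- the Vandermonde data
  set a : Fin (n + 2) → F := fun j => if hj : (j : ℕ) < n then α ⟨j, hj⟩ else 0 with ha
  set d : Fin (n + 2) → F := fun j => if hj : (j : ℕ) < n then c j * v ⟨j, hj⟩ else 0 with hd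
  have hvdm : ∀ i : ℕ, i < T.card → ∑ j ∈ T, d j * a j ^ i = 0 := by
    intro i hi
    have hik : i < k := by omega
    set fi : Fin k := ⟨i, hik⟩ with hfi
    have h1 := hsplit fi
    have hink1 : (fi : ℕ) ≠ k - 1 := by simp [hfi]; omega
    rw [Gjn fi, if_neg hink1, mul_zero, zero_add] at h1
    have hterm1 : c jn1 * G fi jn1 = 0 := by
      by_cases h2 : (fi : ℕ) = k - 2
      · have hTcard' : T.card = k - 1 := by simp only [hfi] at h2; omega
        have hTeqS : T = S := Finset.eq_of_subset_of_card_le hTS (by omega)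
        have : jn1 ∉ S := hTeqS ▸ hjn1T
        rw [hc jn1 this, zero_mul]
      · rw [Gjn1 fi, if_neg h2, if_neg hink1, mul_zero]
    rw [hterm1, zero_add] at h1
    rw [← h1]
    apply Finset.sum_congr rfl
    intro j hj
    have hjlt : (j : ℕ) < n := (Finset.mem_filter.1 hj).2
    rw [GTmem fi j hjlt, if_neg hink1]
    simp only [hd, ha, dif_pos hjlt, hfi]
    ring
  have hcT : ∀ j ∈ T, c j = 0 := by
    intro j hj
    have hjlt : (j : ℕ) < n := (Finset.mem_filter.1 hj).2
    have hinj : Set.InjOn a T := by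
      intro j1 hj1 j2 hj2 heq
      have hl1 : ((j1 : Fin (n+2)) : ℕ) < n := (Finset.mem_filter.1 hj1).2
      have hl2 : ((j2 : Fin (n+2)) : ℕ) < n := (Finset.mem_filter.1 hj2).2
      simp only [ha, dif_pos hl1, dif_pos hl2] at heq
      have := hα heq
      have := congrArg Fin.val this
      simp only at this
      exact Fin.ext this
    have := vdm_zero T rfl a hinj d hvdm j hj
    simp only [hd, dif_pos hjlt] at this
    rcases mul_eq_zero.1 this with h | h
    · exact h
    · exact absurd h (hv _)
  have hsumT0 : ∀ i : Fin k, ∑ j ∈ T, c j * G i j = 0 := by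
    intro i
    apply Finset.sum_eq_zero
    intro j hj
    rw [hcT j hj, zero_mul]
  have hcjn1 : c jn1 = 0 := by
    have hlt : k - 2 < k := by omega
    have h1 := hsplit ⟨k - 2, hlt⟩
    rw [hsumT0, Gjn ⟨k - 2, hlt⟩, Gjn1 ⟨k - 2, hlt⟩] at h1
    simp [show ¬ (k - 2 = k - 1) by omega] at h1
    exact h1
  have hcjn : c jn = 0 := by
    have hlt : k - 1 < k := by omega
    have h1 := hsplit ⟨k - 1, hlt⟩
    rw [hsumT0, Gjn ⟨k - 1, hlt⟩, Gjn1 ⟨k - 1, hlt⟩] at h1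
    simp [show ¬ (k - 1 = k - 2) by omega, hcjn1] at h1
    exact h1
  intro j
  by_cases hjlt : (j : ℕ) < n
  · by_cases hjS : j ∈ S
    · exact hcT j (Finset.mem_filter.2 ⟨hjS, hjlt⟩)
    · exact hc j hjS
  · have hj2 : (j : ℕ) < n + 2 := j.2
    by_cases hjeq : (j : ℕ) = n
    · have : j = jn := Fin.ext hjeq
      rw [this]; exact hcjn
    · have hval : (j : ℕ) = n + 1 := by omega
      have : j = jn1 := Fin.ext hval
      rw [this]; exact hcjn1

/-- Any `k-1` columns of `G_k` are linearly independent over `F`; consequently every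
nonzero word of the dual code `C_k(A,v)^⊥` has Hamming weight at least `k`. -/
theorem stmt_14 (F : Type*) [Field F] [Fintype F] [DecidableEq F] (n k : ℕ)
    (hk : 3 ≤ k) (hkn : k ≤ n) (hnq : n ≤ Fintype.card F)
    (α v : Fin n → F) (hα : Function.Injective α) (hv : ∀ i, v i ≠ 0) (δ : F) :
    (∀ S : Finset (Fin (n + 2)), S.card = k - 1 →
        LinearIndependent F
          (fun j : {x // x ∈ S} => fun i : Fin k => Gkmat F n k α v δ i j.1)) ∧
      (∀ y ∈ dualCode (Submodule.span F (Set.range (Gkmat F n k α v δ))),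
        y ≠ 0 → k ≤ hammingNorm y) := by
  classical
  constructor
  · intro S hScard
    rw [Fintype.linearIndependent_iff]
    intro g hg j
    set c : Fin (n + 2) → F := fun j => if h : j ∈ S then g ⟨j, h⟩ else 0 with hcdef
    have hc0 : ∀ j, j ∉ S → c j = 0 := fun j hj => dif_neg hj
    have hsum : ∀ i : Fin k, ∑ j, c j * Gkmat F n k α v δ i j = 0 := by
      intro i
      have h1 := congrFun hg i
      rw [Finset.sum_apply, Pi.zero_apply] at h1
      calc ∑ j, c j * Gkmat F n k α v δ i j
          = ∑ j ∈ S, c j * Gkmat F n k α v δ i j :=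
            (Finset.sum_subset (Finset.subset_univ S)
              (fun x _ hx => by rw [hc0 x hx, zero_mul])).symm
        _ = ∑ j ∈ S.attach, c (j : Fin (n+2)) * Gkmat F n k α v δ i (j : Fin (n+2)) :=
            (Finset.sum_attach S _).symm
        _ = 0 := by
            rw [← Finset.univ_eq_attach, ← h1]
            apply Finset.sum_congr rfl
            intro x _
            simp only [hcdef, dif_pos x.2, Pi.smul_apply, smul_eq_mul]
    have := key_dep n k hk hkn α v hα hv δ S hScard c hc0 hsum j.1
    have h2 : c j.1 = g j := dif_pos j.2
    rw [← h2, this]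
  · intro y hy hy0
    have hy' : ∀ x ∈ Submodule.span F (Set.range (Gkmat F n k α v δ)),
        ∑ i, x i * y i = 0 := hy
    by_contra hlt
    push_neg at hlt
    have hnorm : hammingNorm y ≤ k - 1 := by omega
    have hsupp : ({j | y j ≠ 0} : Finset (Fin (n+2))).card ≤ k - 1 := hnorm
    obtain ⟨S, hsubS, -, hScard⟩ := Finset.exists_subsuperset_card_eq
      (Finset.subset_univ ({j | y j ≠ 0} : Finset (Fin (n+2)))) hsupp
      (by rw [Finset.card_univ, Fintype.card_fin]; omega)
    have hc0 : ∀ j, j ∉ S → y j = 0 := by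
      intro j hj
      by_contra hyj
      exact hj (hsubS (by simpa using hyj))
    have hsum : ∀ i : Fin k, ∑ j, y j * Gkmat F n k α v δ i j = 0 := by
      intro i
      have hrow : Gkmat F n k α v δ i ∈ Submodule.span F (Set.range (Gkmat F n k α v δ)) :=
        Submodule.subset_span ⟨i, rfl⟩
      have := hy' _ hrow
      rw [← this]
      exact Finset.sum_congr rfl fun j _ => mul_comm _ _
    have := key_dep n k hk hkn α v hα hv δ S hScard y hc0 hsum
    exact hy0 (funext this)
end

section
/- Let k ≥ 3 and let α_1, …, α_{k−2} be elements of a field and δ an element of the same field. The determinant of the k×k matrix whose j-th column, for 1 ≤ j ≤ k−2, is (1, α_j, α_j^2, …, α_j^{k−2}, α_j^k)^T, whose (k−1)-th column is (0, …, 0, 0, 1)^T, and whose k-th column is (0, …, 0, 1, δ)^T equals −Π_{1≤i<j≤k−2}(α_j − α_i); in particular, if the α_i are pairwise distinct this matrix is nonsingular. -/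
/-- The k×k matrix of the statement: columns `1 ≤ j ≤ k-2` are
`(1, α_j, α_j², …, α_j^{k-2}, α_j^k)ᵀ`, the `(k-1)`-th column is `(0, …, 0, 1)ᵀ`
and the `k`-th column is `(0, …, 0, 1, δ)ᵀ`. -/
noncomputable def M16 (F : Type*) [Field F] (k : ℕ) (α : Fin (k - 2) → F) (δ : F) :
    Matrix (Fin k) (Fin k) F :=
  Matrix.of fun i j =>
    if hj : (j : ℕ) < k - 2 then
      α ⟨j, hj⟩ ^ (if (i : ℕ) = k - 1 then k else (i : ℕ))
    else if (j : ℕ) = k - 2 then (if (i : ℕ) = k - 1 then 1 else 0)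
    else if (i : ℕ) = k - 2 then 1 else if (i : ℕ) = k - 1 then δ else 0

/-- The determinant of the above matrix equals `-∏_{i<j} (α_j - α_i)`; in particular,
if the `α_i` are pairwise distinct the matrix is nonsingular. -/
theorem stmt_16 (F : Type*) [Field F] (k : ℕ) (hk : 3 ≤ k)
    (α : Fin (k - 2) → F) (δ : F) :
    (M16 F k α δ).det = -(∏ i, ∏ j ∈ Finset.Ioi i, (α j - α i)) ∧
      (Function.Injective α → (M16 F k α δ).det ≠ 0) := by
  obtain ⟨n, rfl⟩ : ∃ n, k = n + 3 := ⟨k - 3, by omega⟩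
  set A : Matrix (Fin (n+1)) (Fin (n+1)) F := (Matrix.vandermonde α).transpose with hA
  set C : Matrix (Fin 2) (Fin (n+1)) F :=
    Matrix.of (fun i j => α j ^ (if (i : Fin 2) = 0 then n+1 else n+3)) with hC
  set D : Matrix (Fin 2) (Fin 2) F := !![0, 1; 1, δ] with hD
  have key : (M16 F (n+3) α δ).submatrix (finSumFinEquiv (m := n+1) (n := 2))
      (finSumFinEquiv (m := n+1) (n := 2)) = Matrix.fromBlocks A 0 C D := by
    ext i j
    rcases i with i | i <;> rcases j with j | j <;>
      simp only [Matrix.submatrix_apply, finSumFinEquiv_apply_left, finSumFinEquiv_apply_right,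
        M16, Matrix.of_apply, Matrix.fromBlocks_apply₁₁, Matrix.fromBlocks_apply₁₂,
        Matrix.fromBlocks_apply₂₁, Matrix.fromBlocks_apply₂₂, Fin.coe_castAdd, Fin.coe_natAdd,
        hA, hC, hD, Matrix.transpose_apply, Matrix.vandermonde,
        show (n+3-2 : ℕ) = n+1 from rfl, show (n+3-1 : ℕ) = n+2 from rfl]
    · have hi := i.isLt; have hj := j.isLt
      split_ifs <;> first | rfl | (exfalso; omega)
    · fin_cases j <;> simp only [Fin.val_mk, Fin.mk_zero, Fin.mk_one, Fin.val_zero,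
        Fin.val_one, Fin.isValue, Matrix.zero_apply] <;> have hi := i.isLt <;>
        split_ifs <;> first | rfl | (exfalso; omega)
    · fin_cases i <;> simp only [Fin.val_mk, Fin.mk_zero, Fin.mk_one, Fin.val_zero,
        Fin.val_one, Fin.isValue] <;> have hj := j.isLt <;>
        split_ifs <;> first | rfl | (exfalso; omega)
    · fin_cases i <;> fin_cases j <;> simp only [Fin.val_mk, Fin.mk_zero, Fin.mk_one,
        Fin.val_zero, Fin.val_one, Fin.isValue, Matrix.cons_val_zero, Matrix.cons_val_one,
        Matrix.head_cons, Matrix.head_fin_const, Matrix.of_apply, Matrix.cons_val', Matrix.empty_val'] <;>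
        split_ifs <;> first | rfl | (exfalso; omega)
  have hdetD : D.det = -1 := by
    rw [hD, Matrix.det_fin_two_of]; ring
  have hdet : (M16 F (n+3) α δ).det = -(∏ i, ∏ j ∈ Finset.Ioi i, (α j - α i)) := by
    rw [← Matrix.det_submatrix_equiv_self (finSumFinEquiv (m := n+1) (n := 2))
      (M16 F (n+3) α δ), key, Matrix.det_fromBlocks_zero₁₂, hdetD, hA, Matrix.det_transpose,
      Matrix.det_vandermonde]
    ring
  refine ⟨hdet, fun hinj => ?_⟩
  rw [hdet, neg_ne_zero, Finset.prod_ne_zero_iff]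
  intro i _
  rw [Finset.prod_ne_zero_iff]
  intro j hj
  rw [Finset.mem_Ioi] at hj
  exact sub_ne_zero_of_ne fun h => (Fin.ne_of_lt hj) (hinj h).symm
end
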